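/- There exists a (computable) coloring c : ℕ → Bool such that for every infinite set S of positive integers, c is not constant on the set S ∪ {x + y : x, y ∈ S}, where the sum x + y is allowed to have x = y (in particular 2x is included for each x ∈ S). -/
import Mathlib

open Primrec in
lemma primrec_log2 : Primrec (Nat.log 2) := by
  have key : ∀ n : ℕ, Nat.log 2 n = if n < 2 then 0 else Nat.log 2 (n / 2) + 1 := by
    intro n
    split
    · exact Nat.log_of_lt ‹_›
    · rw [Nat.log_div_base]
      have : 0 < Nat.log 2 n := Nat.log_pos (by norm_num) (by omega)
      omega
  have g : Unit → List ℕ → Option ℕ := fun _ L =>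
    some (if L.length < 2 then 0 else (L.getD (L.length / 2) 0) + 1)
  have hg : Primrec₂ (fun (_ : Unit) (L : List ℕ) =>
      some (if L.length < 2 then 0 else (L.getD (L.length / 2) 0) + 1) : Unit → List ℕ → Option ℕ) := by
    apply Primrec.option_some.comp
    apply Primrec.ite
    · exact Primrec.nat_lt.comp (Primrec.list_length.comp Primrec.snd) (Primrec.const 2)
    · exact Primrec.const 0
    · exact Primrec.succ.comp <| (Primrec.list_getD 0).comp
        Primrec.snd
        (Primrec.nat_div.comp (Primrec.list_length.comp Primrec.snd) (Primrec.const 2))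
  have H : Primrec₂ (fun (_ : Unit) n => Nat.log 2 n) := by
    apply Primrec.nat_strong_rec _ hg
    intro _ n
    simp only [List.length_map, List.length_range, Option.some.injEq]
    rw [key n]
    split
    · rfl
    · congr 1
      rw [List.getD_eq_getElem?_getD]
      have hlt : n / 2 < n := Nat.div_lt_self (by omega) (by norm_num)
      simp [hlt]
  exact H.comp (Primrec.const ()) Primrec.id

/-- There is a computable coloring `c : ℕ → Bool` such that for every
infinite set `S` of positive integers, `c` is not constant on
`S ∪ {x + y : x, y ∈ S}` (sums with repetition allowed, so `2x` is included). -/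
theorem HT_le_two_fails_with_repetition :
    ∃ c : ℕ → Bool, Computable c ∧
      ∀ S : Set ℕ, S.Infinite → (∀ x ∈ S, 0 < x) →
        ¬ ∀ z₁ ∈ S ∪ {z | ∃ x ∈ S, ∃ y ∈ S, z = x + y},
          ∀ z₂ ∈ S ∪ {z | ∃ x ∈ S, ∃ y ∈ S, z = x + y}, c z₁ = c z₂ := by
  refine ⟨fun n => Nat.bodd (Nat.log 2 n), (Primrec.nat_bodd.comp primrec_log2).to_comp, ?_⟩
  intro S hS hpos h
  obtain ⟨x, hx⟩ := hS.nonempty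
  have hx0 : 0 < x := hpos x hx
  have h1 : Nat.log 2 (x + x) = Nat.log 2 x + 1 := by
    have : x + x = x * 2 := by ring
    rw [this, Nat.log_mul_base (by norm_num) hx0.ne']
  have := h x (Or.inl hx) (x + x) (Or.inr ⟨x, hx, x, hx, rfl⟩)
  simp only [] at this
  rw [h1] at this
  simp [Nat.bodd_succ] at this
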